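/- Let n ≥ 1 and let G be a real n×n matrix with zero diagonal. The public-good provision game with parameters (G, q) has exactly one Nash equilibrium for every q ∈ ℝⁿ if and only if I + G is a P-matrix. -/

import Mathlib

open Matrix Finset

/-- Nash equilibrium of the public-good provision game with parameters `(G, q)`. -/
def NashEq {n : ℕ} (G : Matrix (Fin n) (Fin n) ℝ) (q x : Fin n → ℝ) : Prop :=
  ∀ i, x i = max 0 (q i - ∑ j ∈ Finset.univ.erase i, G i j * x j)

/-- `M` is a P-matrix: every principal submatrix has strictly positive determinant. -/
def IsPMatrix {n : ℕ} (M : Matrix (Fin n) (Fin n) ℝ) : Prop :=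
  ∀ s : Finset (Fin n), s.Nonempty →
    0 < (M.submatrix (Subtype.val : {i // i ∈ s} → Fin n) Subtype.val).det

set_option maxHeartbeats 1000000
set_option linter.unusedTactic false
set_option linter.unreachableTactic false
set_option linter.unusedSectionVars false

open Filter Topology Polynomial

namespace PGame

section Gen
variable {ι : Type*} [Fintype ι] [DecidableEq ι] {κ : Type*} [Fintype κ] [DecidableEq κ]

def isPg (M : Matrix ι ι ℝ) : Prop :=
  ∀ s : Finset ι, s.Nonempty →
    0 < (M.submatrix (Subtype.val : {i // i ∈ s} → ι) Subtype.val).det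

lemma det_submatrix_map (M : Matrix ι ι ℝ) (f : κ ↪ ι) (t : Finset κ) :
    ((M.submatrix f f).submatrix (Subtype.val : {i // i ∈ t} → κ) Subtype.val).det
      = (M.submatrix (Subtype.val : {i // i ∈ t.map f} → ι) Subtype.val).det := by
  have hbij : Function.Bijective
      (fun x : {i // i ∈ t} => (⟨f x.1, Finset.mem_map_of_mem f x.2⟩ : {i // i ∈ t.map f})) := by
    constructor
    · intro a b hab
      exact Subtype.ext (f.injective (congrArg Subtype.val hab))
    · rintro ⟨y, hy⟩
      obtain ⟨x, hx, rfl⟩ := Finset.mem_map.1 hy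
      exact ⟨⟨x, hx⟩, rfl⟩
  rw [← Matrix.det_submatrix_equiv_self (Equiv.ofBijective _ hbij)
      (M.submatrix (Subtype.val : {i // i ∈ t.map f} → ι) Subtype.val)]
  rfl

lemma isPg_submatrix (M : Matrix ι ι ℝ) (hM : isPg M) (f : κ ↪ ι) :
    isPg (M.submatrix f f) := by
  intro t ht
  rw [det_submatrix_map M f t]
  exact hM (t.map f) ht.map

lemma isPg_det {M : Matrix ι ι ℝ} (hM : isPg M) : 0 < M.det := by
  rcases isEmpty_or_nonempty ι with h | h
  · simp [Matrix.det_isEmpty]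
  · have h2 := Matrix.det_submatrix_equiv_self
        (Equiv.subtypeUnivEquiv (fun i : ι => Finset.mem_univ i)) M
    rw [← h2]
    exact hM Finset.univ Finset.univ_nonempty

lemma det_updateColumn_single (B : Matrix ι ι ℝ) (a : ι) :
    (B.updateCol a (Pi.single a 1)).det
      = (B.submatrix (Subtype.val : {i // i ≠ a} → ι) Subtype.val).det := by
  classical
  set C := B.updateCol a (Pi.single a 1) with hC
  set e := Equiv.sumCompl (fun i : ι => i = a) with he
  rw [← Matrix.det_submatrix_equiv_self e C,
    ← Matrix.fromBlocks_toBlocks (C.submatrix e e)]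
  have h21 : (C.submatrix e e).toBlocks₂₁ = 0 := by
    ext i j
    have hj : (j : ι) = a := j.2
    have hi : (i : ι) ≠ a := i.2
    simp [Matrix.toBlocks₂₁, hC, Matrix.updateCol_apply, he, hj, Pi.single_apply, hi]
  rw [h21, Matrix.det_fromBlocks_zero₂₁]
  have h11 : (C.submatrix e e).toBlocks₁₁.det = 1 := by
    haveI : Unique {i : ι // i = a} := ⟨⟨⟨a, rfl⟩⟩, fun x => Subtype.ext x.2⟩
    rw [Matrix.det_unique]
    have hd : ((default : {i : ι // i = a}) : ι) = a := (default : {i : ι // i = a}).2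
    simp [Matrix.toBlocks₁₁, hC, Matrix.updateCol_apply, he, Pi.single_apply, hd]
  have h22 : (C.submatrix e e).toBlocks₂₂
      = B.submatrix (Subtype.val : {i // i ≠ a} → ι) Subtype.val := by
    ext i j
    have hj : (j : ι) ≠ a := j.2
    simp [Matrix.toBlocks₂₂, hC, Matrix.updateCol_apply, he, hj]
  rw [h11, h22, one_mul]

end Gen

section GenU
universe u

lemma det_add_diagonal_pos_aux :
    ∀ (k : ℕ) (ι : Type u) (_ : Fintype ι) (_ : DecidableEq ι), Fintype.card ι ≤ k →
    ∀ (M : Matrix ι ι ℝ), isPg M → ∀ (d : ι → ℝ), (∀ i, 0 ≤ d i) →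
      0 < (M + Matrix.diagonal d).det := by
  intro k
  induction k with
  | zero =>
    intro ι _ _ hcard M hM d hd
    haveI : IsEmpty ι := Fintype.card_eq_zero_iff.mp (Nat.le_zero.mp hcard)
    simp [Matrix.det_isEmpty]
  | succ k IH =>
    intro ι _ _ hcard M hM d hd
    have key : ∀ s : Finset ι,
        0 < (M + Matrix.diagonal (fun i => if i ∈ s then d i else 0)).det := by
      intro s
      induction s using Finset.induction_on with
      | empty =>
        have h0 : (fun i : ι => if i ∈ (∅ : Finset ι) then d i else 0) = fun _ => 0 := by
          funext i; simp
        rw [h0]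
        simpa using isPg_det hM
      | @insert a s ha ih =>
        set B := M + Matrix.diagonal (fun i => if i ∈ s then d i else 0) with hB
        have hN : M + Matrix.diagonal (fun i => if i ∈ insert a s then d i else 0)
            = B.updateCol a ((fun i => B i a) + d a • (Pi.single a 1 : ι → ℝ)) := by
          ext i j
          by_cases hj : j = a
          · subst hj
            by_cases hi : i = j
            · subst hi
              simp [hB, Matrix.updateCol_apply, Matrix.diagonal_apply, Pi.single_apply, ha]
            · simp [hB, Matrix.updateCol_apply, Matrix.diagonal_apply, Pi.single_apply, hi]
          · by_cases hi : i = j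
            · subst hi
              have : i ∈ insert a s ↔ i ∈ s := by
                constructor
                · intro h; rcases Finset.mem_insert.mp h with h | h
                  · exact absurd h hj
                  · exact h
                · intro h; exact Finset.mem_insert_of_mem h
              simp [hB, Matrix.updateCol_apply, Matrix.diagonal_apply, hj, this]
            · simp [hB, Matrix.updateCol_apply, Matrix.diagonal_apply, hj, hi]
        rw [hN, Matrix.det_updateCol_add, Matrix.updateCol_eq_self,
          Matrix.det_updateCol_smul, det_updateColumn_single]
        have hsub : 0 < (B.submatrix (Subtype.val : {i // i ≠ a} → ι) Subtype.val).det := by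
          have hcard' : Fintype.card {i : ι // i ≠ a} ≤ k := by
            have h1 : Fintype.card {i : ι // ¬ i = a}
                = Fintype.card ι - Fintype.card {i : ι // i = a} :=
              Fintype.card_subtype_compl (fun i : ι => i = a)
            have h2 : Fintype.card {i : ι // i = a} = 1 := Fintype.card_subtype_eq a
            have h3 : 1 ≤ Fintype.card ι := Fintype.card_pos_iff.mpr ⟨a⟩
            have h4 : Fintype.card {i : ι // i ≠ a} = Fintype.card {i : ι // ¬ i = a} := rfl
            omega
          have hBsub : B.submatrix (Subtype.val : {i // i ≠ a} → ι) Subtype.val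
              = M.submatrix (Subtype.val : {i // i ≠ a} → ι) Subtype.val
                + Matrix.diagonal (fun i : {i : ι // i ≠ a} => if (i : ι) ∈ s then d i else 0) := by
            ext i j
            by_cases h : i = j
            · subst h
              simp [hB, Matrix.diagonal_apply]
            · have h' : (i : ι) ≠ (j : ι) := fun hc => h (Subtype.ext hc)
              simp [hB, Matrix.diagonal_apply, h, h']
          rw [hBsub]
          exact IH _ _ _ hcard' _
            (isPg_submatrix M hM ⟨Subtype.val, Subtype.val_injective⟩) _
            (fun i => by by_cases h : (i : ι) ∈ s <;> simp [h, hd])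
        have h2 : 0 ≤ d a * (B.submatrix (Subtype.val : {i // i ≠ a} → ι) Subtype.val).det :=
          mul_nonneg (hd a) hsub.le
        linarith
    have := key Finset.univ
    have h3 : (fun i : ι => if i ∈ Finset.univ then d i else 0) = d := by
      funext i; simp
    rwa [h3] at this


lemma det_add_diagonal_pos {ι : Type} [Fintype ι] [DecidableEq ι] (M : Matrix ι ι ℝ)
    (hM : isPg M) (d : ι → ℝ) (hd : ∀ i, 0 ≤ d i) : 0 < (M + Matrix.diagonal d).det :=
  det_add_diagonal_pos_aux (Fintype.card ι) ι inferInstance inferInstance le_rfl M hM d hd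
end GenU

section FinStuff
variable {n : ℕ}

variable {M : Matrix (Fin n) (Fin n) ℝ}

lemma sign_nonreversal (hM : IsPMatrix M) (z : Fin n → ℝ)
    (hz : ∀ i, z i * (M *ᵥ z) i ≤ 0) : z = 0 := by
  classical
  by_contra h
  have hne : ∃ i, z i ≠ 0 := by
    by_contra h'
    push_neg at h'
    exact h (funext fun i => h' i)
  obtain ⟨i0, hi0⟩ := hne
  set s : Finset (Fin n) := Finset.univ.filter (fun i => z i ≠ 0) with hs
  have hi0s : i0 ∈ s := by simp [hs, hi0]
  have hsne : s.Nonempty := ⟨i0, hi0s⟩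
  set A := M.submatrix (Subtype.val : {i // i ∈ s} → Fin n) Subtype.val with hA
  have hzs : ∀ i : {i // i ∈ s}, z i.1 ≠ 0 := fun i => (Finset.mem_filter.mp i.2).2
  set dd : {i // i ∈ s} → ℝ := fun i => -((M *ᵥ z) i.1) / z i.1 with hdd
  have hddpos : ∀ i, 0 ≤ dd i := by
    intro i
    have h1 : dd i = (-(z i.1 * (M *ᵥ z) i.1)) / (z i.1 * z i.1) := by
      simp only [hdd]
      rw [neg_div, neg_div, mul_div_mul_left _ _ (hzs i)]
    rw [h1]
    exact div_nonneg (neg_nonneg.mpr (hz i.1)) (mul_self_nonneg _)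
  set v : {i // i ∈ s} → ℝ := fun i => z i.1 with hv
  have hker : (A + Matrix.diagonal dd) *ᵥ v = 0 := by
    funext i
    rw [Matrix.add_mulVec]
    have h2 : (A *ᵥ v) i = (M *ᵥ z) i.1 := by
      have : ∀ j ∈ Finset.univ \ s, M i.1 j * z j = 0 := by
        intro j hj
        have : z j = 0 := by
          by_contra hzj
          exact absurd (by simp [hs, hzj] : j ∈ s) (Finset.mem_sdiff.mp hj).2
        simp [this]
      calc (A *ᵥ v) i = ∑ j : {i // i ∈ s}, M i.1 j.1 * z j.1 := by
              simp [hA, Matrix.mulVec, dotProduct, hv]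
        _ = ∑ j ∈ s, M i.1 j * z j := by
              rw [← Finset.sum_coe_sort s (fun j => M i.1 j * z j)]
        _ = ∑ j : Fin n, M i.1 j * z j := by
              apply Finset.sum_subset (Finset.subset_univ s)
              intro j _ hjs
              have : z j = 0 := by
                by_contra hzj
                exact hjs (by simp [hs, hzj])
              simp [this]
        _ = (M *ᵥ z) i.1 := by simp [Matrix.mulVec, dotProduct]
    have h3 : (Matrix.diagonal dd *ᵥ v) i = -((M *ᵥ z) i.1) := by
      rw [Matrix.mulVec_diagonal]
      simp only [hdd, hv]
      exact div_mul_cancel₀ _ (hzs i)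
    simp [h2, h3, Pi.add_apply]
  have hvne : v ≠ 0 := by
    intro hv0
    exact hzs ⟨i0, hi0s⟩ (congrFun hv0 ⟨i0, hi0s⟩)
  have hdet : (A + Matrix.diagonal dd).det = 0 :=
    Matrix.exists_mulVec_eq_zero_iff.mp ⟨v, hvne, hker⟩
  have := det_add_diagonal_pos A
    (isPg_submatrix M (fun t ht => hM t ht) ⟨Subtype.val, Subtype.val_injective⟩) dd hddpos
  rw [hdet] at this
  exact lt_irrefl 0 this

def posP (z : Fin n → ℝ) : Fin n → ℝ := fun i => max (z i) 0
def negP (z : Fin n → ℝ) : Fin n → ℝ := fun i => max (-z i) 0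
def Fm (M : Matrix (Fin n) (Fin n) ℝ) (z : Fin n → ℝ) : Fin n → ℝ :=
  fun i => (M *ᵥ posP z) i - negP z i

lemma posP_nonneg (z : Fin n → ℝ) (i : Fin n) : 0 ≤ posP z i := le_max_right _ _
lemma negP_nonneg (z : Fin n → ℝ) (i : Fin n) : 0 ≤ negP z i := le_max_right _ _
lemma posP_sub_negP (z : Fin n → ℝ) (i : Fin n) : posP z i - negP z i = z i := by
  rcases le_total (z i) 0 with h | h
  · simp [posP, negP, max_eq_right h, max_eq_left (neg_nonneg.mpr h)]
  · simp [posP, negP, max_eq_left h, max_eq_right (neg_nonpos.mpr h)]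
lemma posP_mul_negP (z : Fin n → ℝ) (i : Fin n) : posP z i * negP z i = 0 := by
  rcases le_total (z i) 0 with h | h
  · simp [posP, max_eq_right h]
  · simp [negP, max_eq_right (neg_nonpos.mpr h)]

lemma posP_eq (x w : Fin n → ℝ) (hx : ∀ i, 0 ≤ x i) (hw : ∀ i, 0 ≤ w i)
    (hc : ∀ i, x i * w i = 0) : posP (x - w) = x ∧ negP (x - w) = w := by
  constructor <;> funext i <;>
    rcases mul_eq_zero.mp (hc i) with h | h <;>
    simp [posP, negP, Pi.sub_apply, h] <;>
    first
      | exact hw i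
      | exact hx i
      | exact max_eq_left (by linarith [hw i, hx i])
      | exact max_eq_right (by linarith [hw i, hx i])

lemma max_char (a b : ℝ) : a = max 0 b ↔ 0 ≤ a ∧ b ≤ a ∧ a * (a - b) = 0 := by
  constructor
  · rintro rfl
    refine ⟨le_max_left 0 b, le_max_right 0 b, ?_⟩
    rcases le_total b 0 with h | h
    · rw [max_eq_left h]; ring
    · rw [max_eq_right h]; ring
  · rintro ⟨h1, h2, h3⟩
    rcases mul_eq_zero.mp h3 with h | h
    · subst h
      exact (max_eq_left h2).symm
    · have : a = b := by linarith
      subst this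
      exact (max_eq_right h1).symm

lemma nash_iff (G : Matrix (Fin n) (Fin n) ℝ) (hdiag : ∀ i, G i i = 0) (q x : Fin n → ℝ) :
    NashEq G q x ↔ ∀ i, 0 ≤ x i ∧ 0 ≤ ((1 + G) *ᵥ x) i - q i
      ∧ x i * (((1 + G) *ᵥ x) i - q i) = 0 := by
  have hT : ∀ i, ∑ j ∈ Finset.univ.erase i, G i j * x j = (G *ᵥ x) i := by
    intro i
    rw [Finset.sum_erase _ (by simp [hdiag i])]
    simp [Matrix.mulVec, dotProduct]
  have hM : ∀ i, ((1 + G) *ᵥ x) i = x i + (G *ᵥ x) i := by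
    intro i
    rw [Matrix.add_mulVec, Matrix.one_mulVec]
    simp
  unfold NashEq
  refine forall_congr' fun i => ?_
  rw [hT i, max_char (x i) (q i - (G *ᵥ x) i), hM i]
  constructor
  · rintro ⟨h1, h2, h3⟩
    exact ⟨h1, by linarith, by rw [← h3]; ring⟩
  · rintro ⟨h1, h2, h3⟩
    exact ⟨h1, by linarith, by rw [← h3]; ring⟩

lemma Fm_nash (G : Matrix (Fin n) (Fin n) ℝ) (hdiag : ∀ i, G i i = 0) (q z : Fin n → ℝ)
    (hz : Fm (1 + G) z = q) : NashEq G q (posP z) := by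
  rw [nash_iff G hdiag]
  intro i
  have h1 : ((1 + G) *ᵥ posP z) i - q i = negP z i := by
    have := congrFun hz i
    simp only [Fm] at this
    linarith
  exact ⟨posP_nonneg z i, by rw [h1]; exact negP_nonneg z i,
    by rw [h1]; exact posP_mul_negP z i⟩

lemma nash_Fm (G : Matrix (Fin n) (Fin n) ℝ) (hdiag : ∀ i, G i i = 0) (q x : Fin n → ℝ)
    (hx : NashEq G q x) :
    Fm (1 + G) (x - ((1 + G) *ᵥ x - q)) = q ∧ posP (x - ((1 + G) *ᵥ x - q)) = x := by
  rw [nash_iff G hdiag] at hx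
  have hpn := posP_eq x ((1 + G) *ᵥ x - q) (fun i => (hx i).1) (fun i => (hx i).2.1)
    (fun i => (hx i).2.2)
  refine ⟨?_, hpn.1⟩
  funext i
  simp only [Fm, hpn.1, hpn.2, Pi.sub_apply]
  ring

lemma Fm_inj {M : Matrix (Fin n) (Fin n) ℝ} (hM : IsPMatrix M) :
    Function.Injective (Fm M) := by
  intro z₁ z₂ h
  have hd : posP z₁ - posP z₂ = 0 := by
    apply sign_nonreversal hM
    intro i
    have hMd : (M *ᵥ (posP z₁ - posP z₂)) i = negP z₁ i - negP z₂ i := by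
      rw [Matrix.mulVec_sub]
      have h1 := congrFun h i
      simp only [Fm] at h1
      simp only [Pi.sub_apply]
      linarith
    rw [hMd]
    have e1 := posP_mul_negP z₁ i
    have e2 := posP_mul_negP z₂ i
    have p1 := posP_nonneg z₁ i
    have p2 := posP_nonneg z₂ i
    have n1 := negP_nonneg z₁ i
    have n2 := negP_nonneg z₂ i
    simp only [Pi.sub_apply]
    nlinarith
  have hpos : posP z₁ = posP z₂ := by
    funext i
    have := congrFun hd i
    simp only [Pi.sub_apply, Pi.zero_apply] at this
    linarith
  have hneg : negP z₁ = negP z₂ := by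
    funext i
    have h1 := congrFun h i
    simp only [Fm, hpos] at h1
    linarith
  funext i
  have := posP_sub_negP z₁ i
  rw [hpos, hneg] at this
  rw [← posP_sub_negP z₂ i, this]

lemma Fm_homog (M : Matrix (Fin n) (Fin n) ℝ) {t : ℝ} (ht : 0 ≤ t) (z : Fin n → ℝ) :
    Fm M (t • z) = t • Fm M z := by
  have hp : posP (t • z) = t • posP z := by
    funext i
    simp only [posP, Pi.smul_apply, smul_eq_mul]
    rw [mul_max_of_nonneg _ _ ht, mul_zero]
  have hn : negP (t • z) = t • negP z := by
    funext i
    simp only [negP, Pi.smul_apply, smul_eq_mul]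
    rw [← mul_neg, mul_max_of_nonneg _ _ ht, mul_zero]
  funext i
  simp only [Fm, hp, hn, Matrix.mulVec_smul, Pi.smul_apply, smul_eq_mul]
  ring

lemma Fm_zero (M : Matrix (Fin n) (Fin n) ℝ) : Fm M 0 = 0 := by
  funext i
  have hp : posP (0 : Fin n → ℝ) = 0 := by funext j; simp [posP]
  simp [Fm, hp, negP]

lemma Fm_cont (M : Matrix (Fin n) (Fin n) ℝ) : Continuous (Fm M) := by
  apply continuous_pi
  intro i
  apply Continuous.sub
  · have : (fun z : Fin n → ℝ => (M *ᵥ posP z) i)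
        = fun z : Fin n → ℝ => ∑ j, M i j * max (z j) 0 := by
      funext z; simp [Matrix.mulVec, dotProduct, posP]
    rw [this]
    exact continuous_finset_sum _ fun j _ =>
      (continuous_const.mul ((continuous_apply j).max continuous_const))
  · exact ((continuous_apply i).neg.max continuous_const)

lemma Fm_coercive {M : Matrix (Fin n) (Fin n) ℝ} (hinj : Function.Injective (Fm M)) :
    ∃ K : ℝ, 0 < K ∧ ∀ z : Fin n → ℝ, ‖z‖ ≤ K * ‖Fm M z‖ := by
  rcases Nat.eq_zero_or_pos n with hn | hn
  · subst hn
    refine ⟨1, one_pos, fun z => ?_⟩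
    have h0 : ‖z‖ = 0 := by
      rw [norm_eq_zero]
      exact Subsingleton.elim z 0
    rw [h0]
    positivity
  · haveI : Nonempty (Fin n) := ⟨⟨0, hn⟩⟩
    haveI : Nontrivial (Fin n → ℝ) := inferInstance
    have hS : IsCompact (Metric.sphere (0 : Fin n → ℝ) 1) := isCompact_sphere 0 1
    have hne : (Metric.sphere (0 : Fin n → ℝ) 1).Nonempty :=
      NormedSpace.sphere_nonempty.mpr zero_le_one
    obtain ⟨u0, hu0S, hmin⟩ := hS.exists_isMinOn hne
      (((Fm_cont M).norm).continuousOn)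
    have hu0 : ‖u0‖ = 1 := by simpa using hu0S
    have hc : 0 < ‖Fm M u0‖ := by
      rw [norm_pos_iff]
      intro h0
      have : u0 = 0 := hinj (by rw [h0, Fm_zero])
      rw [this] at hu0
      simp at hu0
    refine ⟨‖Fm M u0‖⁻¹, inv_pos.mpr hc, fun z => ?_⟩
    rcases eq_or_ne z 0 with rfl | hz
    · simp [Fm_zero]
    · have htz : 0 < ‖z‖ := norm_pos_iff.mpr hz
      set u := ‖z‖⁻¹ • z with hu
      have huS : u ∈ Metric.sphere (0 : Fin n → ℝ) 1 := by
        simp [hu, norm_smul, abs_of_nonneg (inv_nonneg.mpr htz.le), inv_mul_cancel₀ htz.ne']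
      have h1 : ‖Fm M u0‖ ≤ ‖Fm M u‖ := hmin huS
      have h2 : ‖Fm M u‖ = ‖z‖⁻¹ * ‖Fm M z‖ := by
        rw [hu, Fm_homog M (inv_nonneg.mpr htz.le), norm_smul,
          Real.norm_eq_abs, abs_of_nonneg (inv_nonneg.mpr htz.le)]
      rw [h2] at h1
      calc ‖z‖ = ‖Fm M u0‖⁻¹ * (‖Fm M u0‖ * ‖z‖) := by field_simp
        _ ≤ ‖Fm M u0‖⁻¹ * ‖Fm M z‖ := by
            apply mul_le_mul_of_nonneg_left _ (inv_nonneg.mpr hc.le)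
            calc ‖Fm M u0‖ * ‖z‖ ≤ (‖z‖⁻¹ * ‖Fm M z‖) * ‖z‖ :=
                  mul_le_mul_of_nonneg_right h1 htz.le
              _ = ‖Fm M z‖ := by field_simp

lemma sol_continuous (M : Matrix (Fin n) (Fin n) ℝ) (hinj : Function.Injective (Fm M))
    (K : ℝ) (hcoer : ∀ z, ‖z‖ ≤ K * ‖Fm M z‖)
    (Z : (Fin n → ℝ) → (Fin n → ℝ)) (hZ : ∀ p, Fm M (Z p) = p) : Continuous Z := by
  rw [continuous_iff_seqContinuous]
  intro p q hq
  apply tendsto_of_subseq_tendsto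
  intro ns hns
  have hball : ∃ R : ℝ, ∀ k : ℕ, ‖Z (p (ns k))‖ ≤ R := by
    have hb : BddAbove (Set.range fun k => ‖p (ns k)‖) :=
      (hq.comp hns).norm.bddAbove_range
    obtain ⟨R, hR⟩ := hb
    refine ⟨max (K * R) 0, fun k => ?_⟩
    calc ‖Z (p (ns k))‖ ≤ K * ‖Fm M (Z (p (ns k)))‖ := hcoer _
      _ = K * ‖p (ns k)‖ := by rw [hZ]
      _ ≤ max (K * R) 0 := by
          rcases le_total 0 K with hK | hK
          · exact le_max_of_le_left
              (mul_le_mul_of_nonneg_left (hR ⟨k, rfl⟩) hK)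
          · have h0 : (0:ℝ) ≤ ‖p (ns k)‖ := norm_nonneg _
            exact le_max_of_le_right (by nlinarith)
  obtain ⟨R, hR⟩ := hball
  have hmem : ∀ k, Z (p (ns k)) ∈ Metric.closedBall (0 : Fin n → ℝ) R := by
    intro k
    simpa [Metric.mem_closedBall, dist_zero_right] using hR k
  obtain ⟨a, _, φ, hφ, ha⟩ :=
    tendsto_subseq_of_bounded Metric.isBounded_closedBall hmem
  have hFa : Fm M a = q := by
    have h1 : Tendsto (fun k => Fm M (Z (p (ns (φ k))))) atTop (𝓝 (Fm M a)) :=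
      (Fm_cont M).continuousAt.tendsto.comp ha
    have h2 : (fun k => Fm M (Z (p (ns (φ k))))) = fun k => p (ns (φ k)) := by
      funext k; rw [hZ]
    rw [h2] at h1
    have h3 : Tendsto (fun k => p (ns (φ k))) atTop (𝓝 q) :=
      (hq.comp hns).comp hφ.tendsto_atTop
    exact tendsto_nhds_unique h1 h3
  have haZ : a = Z q := hinj (by rw [hFa, hZ])
  exact ⟨φ, haZ ▸ ha⟩


lemma isPMatrix_submatrix_castSucc (M : Matrix (Fin (n+1)) (Fin (n+1)) ℝ)
    (hM : IsPMatrix M) : IsPMatrix (M.submatrix Fin.castSucc Fin.castSucc) := by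
  have h := isPg_submatrix M (fun s hs => hM s hs)
    ⟨Fin.castSucc, Fin.castSucc_injective n⟩
  exact fun s hs => h s hs

lemma posP_smul {n : ℕ} {t : ℝ} (ht : 0 ≤ t) (z : Fin n → ℝ) (j : Fin n) :
    posP (t • z) j = t * posP z j := by
  simp only [posP, Pi.smul_apply, smul_eq_mul]
  rw [mul_max_of_nonneg _ _ ht, mul_zero]

lemma Fm_surj : ∀ (n : ℕ) (M : Matrix (Fin n) (Fin n) ℝ), IsPMatrix M →
    ∀ q : Fin n → ℝ, ∃ z, Fm M z = q := by
  intro n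
  induction n with
  | zero =>
    intro M hM q
    exact ⟨0, funext fun i => i.elim0⟩
  | succ n IH =>
    intro M hM q
    classical
    set M' : Matrix (Fin n) (Fin n) ℝ := M.submatrix Fin.castSucc Fin.castSucc with hM'def
    have hM' : IsPMatrix M' := isPMatrix_submatrix_castSucc M hM
    have hinj' : Function.Injective (Fm M') := Fm_inj hM'
    obtain ⟨K, hK, hcoer⟩ := Fm_coercive hinj'
    have hex : ∀ p : Fin n → ℝ, ∃ z, Fm M' z = p := IH M' hM'
    set Z : (Fin n → ℝ) → (Fin n → ℝ) := fun p => Classical.choose (hex p) with hZdef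
    have hZ : ∀ p, Fm M' (Z p) = p := fun p => Classical.choose_spec (hex p)
    have hZuniq : ∀ p z, Fm M' z = p → z = Z p := fun p z h => hinj' (h.trans (hZ p).symm)
    have hZcont : Continuous Z := sol_continuous M' hinj' K hcoer Z hZ
    have hZhom : ∀ (t : ℝ), 0 < t → ∀ p, Z (t • p) = t • Z p := by
      intro t ht p
      exact (hZuniq _ _ (by rw [Fm_homog M' ht.le, hZ])).symm
    set m : Fin n → ℝ := fun j => M j.castSucc (Fin.last n) with hm
    set r : Fin n → ℝ := fun j => M (Fin.last n) j.castSucc with hr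
    set q0 : Fin n → ℝ := fun i => q i.castSucc with hq0
    have hsp : ∀ (z' : Fin n → ℝ) (s : ℝ),
        posP (Fin.snoc z' s) = Fin.snoc (posP z') (max s 0) := by
      intro z' s
      funext j
      induction j using Fin.lastCases with
      | last => simp [posP, Fin.snoc_last]
      | cast i => simp [posP, Fin.snoc_castSucc]
    have hsn : ∀ (z' : Fin n → ℝ) (s : ℝ),
        negP (Fin.snoc z' s) = Fin.snoc (negP z') (max (-s) 0) := by
      intro z' s
      funext j
      induction j using Fin.lastCases with
      | last => simp [negP, Fin.snoc_last]
      | cast i => simp [negP, Fin.snoc_castSucc]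
    have hcoordc : ∀ (z' : Fin n → ℝ) (s : ℝ) (i : Fin n),
        Fm M (Fin.snoc z' s) i.castSucc = Fm M' z' i + m i * max s 0 := by
      intro z' s i
      simp only [Fm, hsp, hsn, Matrix.mulVec, dotProduct]
      rw [Fin.sum_univ_castSucc]
      simp only [Fin.snoc_castSucc, Fin.snoc_last]
      rw [hM'def]
      simp only [Matrix.submatrix_apply]
      ring
    have hcoordl : ∀ (z' : Fin n → ℝ) (s : ℝ),
        Fm M (Fin.snoc z' s) (Fin.last n)
          = (∑ j, r j * posP z' j) + M (Fin.last n) (Fin.last n) * max s 0 - max (-s) 0 := by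
      intro z' s
      simp only [Fm, hsp, hsn, Matrix.mulVec, dotProduct]
      rw [Fin.sum_univ_castSucc]
      simp only [Fin.snoc_castSucc, Fin.snoc_last, hr]
    set zf : ℝ → (Fin n → ℝ) := fun s => Z (q0 - (max s 0) • m) with hzf
    set g : ℝ → ℝ :=
      fun s => (∑ j, r j * posP (zf s) j)
        + M (Fin.last n) (Fin.last n) * max s 0 - max (-s) 0 - q (Fin.last n) with hg
    have hc0 : Continuous fun s : ℝ => q0 - (max s 0) • m :=
      continuous_const.sub (((continuous_id.max continuous_const)).smul continuous_const)
    have hgcont : Continuous g := by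
      apply Continuous.sub
      apply Continuous.sub
      apply Continuous.add
      · apply continuous_finset_sum
        intro j _
        apply Continuous.mul continuous_const
        exact ((continuous_apply j).comp (hZcont.comp hc0)).max continuous_const
      · exact continuous_const.mul (continuous_id.max continuous_const)
      · exact continuous_id.neg.max continuous_const
      · exact continuous_const
    set C : ℝ := (∑ j, r j * posP (Z q0) j) - q (Fin.last n) with hC
    have hgneg : ∀ s : ℝ, s ≤ 0 → g s = C + s := by
      intro s hs
      have h1 : max s 0 = 0 := max_eq_right hs
      have h2 : max (-s) 0 = -s := max_eq_left (neg_nonneg.mpr hs)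
      simp only [hg, hzf, h1, h2, zero_smul, sub_zero, hC, mul_zero]
      ring
    set ψ : ℝ → ℝ :=
      fun t => (∑ j, r j * posP (Z (t • q0 - m)) j)
        + M (Fin.last n) (Fin.last n) - t * q (Fin.last n) with hψ
    have hψcont : Continuous ψ := by
      apply Continuous.sub
      apply Continuous.add
      · apply continuous_finset_sum
        intro j _
        apply Continuous.mul continuous_const
        have : Continuous fun t : ℝ => t • q0 - m :=
          (continuous_id.smul continuous_const).sub continuous_const
        exact ((continuous_apply j).comp (hZcont.comp this)).max continuous_const
      · exact continuous_const
      · exact continuous_id.mul continuous_const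
    have hψ0 : 0 < ψ 0 := by
      by_contra hcon
      push_neg at hcon
      obtain ⟨γ, hγdef⟩ : ∃ γ : ℝ, γ = ψ 0 := ⟨ψ 0, rfl⟩
      rw [← hγdef] at hcon
      have hγ : γ = (∑ j, r j * posP (Z (-m)) j)
          + M (Fin.last n) (Fin.last n) := by
        rw [hγdef]
        simp [hψ, zero_smul, zero_sub]
      have hFζ : Fm M (Fin.snoc (Z (-m)) 1) = Fin.snoc (0 : Fin n → ℝ) γ := by
        funext i
        induction i using Fin.lastCases with
        | last =>
          rw [hcoordl, Fin.snoc_last, hγ]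
          norm_num
        | cast i =>
          rw [hcoordc, Fin.snoc_castSucc]
          have h6 := congrFun (hZ (-m)) i
          rw [h6]
          simp
      have hFζ' : Fm M (Fin.snoc (0 : Fin n → ℝ) γ) = Fin.snoc (0 : Fin n → ℝ) γ := by
        have hp0 : posP (Fin.snoc (0 : Fin n → ℝ) γ) = 0 := by
          funext j
          induction j using Fin.lastCases with
          | last =>
            simp only [posP, Fin.snoc_last, Pi.zero_apply]
            exact max_eq_right hcon
          | cast i => simp [posP, Fin.snoc_castSucc]
        have hn0 : negP (Fin.snoc (0 : Fin n → ℝ) γ) = Fin.snoc (0 : Fin n → ℝ) (-γ) := by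
          funext j
          induction j using Fin.lastCases with
          | last =>
            simp only [negP, Fin.snoc_last]
            exact max_eq_left (neg_nonneg.mpr hcon)
          | cast i => simp [negP, Fin.snoc_castSucc]
        funext i
        simp only [Fm, hp0, hn0, Matrix.mulVec_zero, Pi.zero_apply, zero_sub]
        induction i using Fin.lastCases with
        | last => simp [Fin.snoc_last]
        | cast i => simp [Fin.snoc_castSucc]
      have hζeq : Fin.snoc (Z (-m)) 1 = Fin.snoc (0 : Fin n → ℝ) γ :=
        Fm_inj hM (hFζ.trans hFζ'.symm)
      have h1 : (1 : ℝ) = γ := by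
        have := congrFun hζeq (Fin.last n)
        simpa [Fin.snoc_last] using this
      linarith
    have hopen : {t : ℝ | 0 < ψ t} ∈ 𝓝 (0 : ℝ) :=
      (isOpen_lt continuous_const hψcont).mem_nhds hψ0
    obtain ⟨δ, hδ, hball⟩ := Metric.mem_nhds_iff.mp hopen
    set t0 : ℝ := min (δ / 2) 1 with ht0
    have ht0pos : 0 < t0 := lt_min (by linarith) one_pos
    have ht0ball : t0 ∈ Metric.ball (0:ℝ) δ := by
      rw [Metric.mem_ball, Real.dist_eq, sub_zero, abs_of_pos ht0pos]
      calc t0 ≤ δ / 2 := min_le_left _ _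
        _ < δ := by linarith
    have hψt0 : 0 < ψ t0 := hball ht0ball
    have hgpos : 0 < g (1 / t0) := by
      have hs : (0:ℝ) < 1 / t0 := by positivity
      have key : g (1 / t0) = ψ t0 / t0 := by
        have h1 : max (1 / t0) 0 = 1 / t0 := max_eq_left hs.le
        have h2 : max (-(1 / t0)) 0 = 0 := max_eq_right (by linarith)
        have h3 : q0 - (1 / t0) • m = (1 / t0) • (t0 • q0 - m) := by
          rw [smul_sub, smul_smul]
          field_simp
          rw [one_smul]
        have h4 : zf (1 / t0) = (1 / t0) • Z (t0 • q0 - m) := by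
          rw [hzf]
          simp only [h1]
          rw [h3, hZhom _ hs]
        simp only [hg, h1, h2, h4]
        have h5 : ∀ j, posP ((1 / t0) • Z (t0 • q0 - m)) j
            = (1 / t0) * posP (Z (t0 • q0 - m)) j := fun j => posP_smul hs.le _ j
        simp only [h5, hψ]
        rw [sub_zero]
        have hsum : (∑ x, r x * (1 / t0 * posP (Z (t0 • q0 - m)) x))
            = (∑ x, r x * posP (Z (t0 • q0 - m)) x) / t0 := by
          rw [Finset.sum_div]
          exact Finset.sum_congr rfl (fun x _ => by ring)
        rw [hsum]
        have ht0ne : t0 ≠ 0 := ht0pos.ne'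
        field_simp
      rw [key]
      positivity
    set s0 : ℝ := -(|C| + 1) with hs0
    have hs0neg : s0 ≤ 0 := by
      have : (0:ℝ) ≤ |C| := abs_nonneg C
      rw [hs0]; linarith
    have hgs0 : g s0 < 0 := by
      rw [hgneg s0 hs0neg, hs0]
      have : C ≤ |C| := le_abs_self C
      linarith
    have hle : s0 ≤ 1 / t0 := by
      have : (0:ℝ) < 1 / t0 := by positivity
      linarith
    obtain ⟨sstar, _, hsstar⟩ := intermediate_value_Icc hle hgcont.continuousOn
      (by constructor <;> [exact hgs0.le; exact hgpos.le] : (0:ℝ) ∈ Set.Icc (g s0) (g (1/t0)))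
    refine ⟨Fin.snoc (zf sstar) sstar, ?_⟩
    funext i
    induction i using Fin.lastCases with
    | last =>
      rw [hcoordl]
      have h0 : (∑ j, r j * posP (zf sstar) j)
          + M (Fin.last n) (Fin.last n) * max sstar 0 - max (-sstar) 0 - q (Fin.last n) = 0 :=
        hsstar
      linarith
    | cast i =>
      rw [hcoordc]
      have h1 := congrFun (hZ (q0 - (max sstar 0) • m)) i
      have h2 : Fm M' (zf sstar) i = q0 i - max sstar 0 * m i := by
        rw [hzf, h1]
        simp
      rw [h2]
      simp only [hq0]
      ring

lemma exists_sign_reversed {n : ℕ} (M : Matrix (Fin n) (Fin n) ℝ)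
    (s : Finset (Fin n)) (hs : s.Nonempty)
    (hdet : (M.submatrix (Subtype.val : {i // i ∈ s} → Fin n) Subtype.val).det ≤ 0) :
    ∃ z : Fin n → ℝ, z ≠ 0 ∧ ∀ i, z i * (M *ᵥ z) i ≤ 0 := by
  classical
  set A := M.submatrix (Subtype.val : {i // i ∈ s} → Fin n) Subtype.val with hA
  set p : Polynomial ℝ := (-A).charpoly with hp
  have hf : ∀ t : ℝ, p.eval t = (A + t • 1).det := by
    intro t
    have h1 : p.eval t = ((Polynomial.evalRingHom t).mapMatrix (charmatrix (-A))).det := by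
      rw [hp, Matrix.charpoly]
      exact RingHom.map_det (Polynomial.evalRingHom t) (charmatrix (-A))
    rw [h1]
    congr 1
    ext i j
    by_cases hij : i = j
    · subst hij
      simp [Matrix.charmatrix_apply_eq, Matrix.add_apply, Matrix.smul_apply, Matrix.one_apply]
      ring
    · simp [Matrix.charmatrix_apply_ne _ _ _ hij, Matrix.add_apply, Matrix.smul_apply,
        Matrix.one_apply, hij]
  have hmonic : p.Monic := Matrix.charpoly_monic _
  have hdeg : p.natDegree = s.card := by
    rw [hp, Matrix.charpoly_natDegree_eq_dim]
    exact Fintype.card_coe s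
  have hcardpos : 0 < s.card := Finset.card_pos.mpr hs
  have hdegpos : 0 < p.degree := by
    rw [← Polynomial.natDegree_pos_iff_degree_pos, hdeg]
    exact hcardpos
  have htend : Tendsto (fun t => p.eval t) atTop atTop :=
    Polynomial.tendsto_atTop_of_leadingCoeff_nonneg p hdegpos
      (by rw [hmonic.leadingCoeff]; exact zero_le_one)
  obtain ⟨t1, ht1⟩ := ((htend.eventually_gt_atTop 0).and (eventually_ge_atTop 0)).exists
  have h0le : (0:ℝ) ≤ t1 := ht1.2
  have heval0 : p.eval 0 ≤ 0 := by
    rw [hf 0]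
    simpa using hdet
  obtain ⟨t0, ht0mem, ht0⟩ := intermediate_value_Icc h0le p.continuous.continuousOn
    (Set.mem_Icc.mpr ⟨heval0, ht1.1.le⟩)
  have ht0nonneg : 0 ≤ t0 := ht0mem.1
  have hdet0 : (A + t0 • 1).det = 0 := by rw [← hf]; exact ht0
  obtain ⟨v, hv, hker⟩ := Matrix.exists_mulVec_eq_zero_iff.mpr hdet0
  have hAv : A *ᵥ v = -(t0 • v) := by
    have h2 : A *ᵥ v + t0 • v = 0 := by
      have h3 : (t0 • (1 : Matrix {i // i ∈ s} {i // i ∈ s} ℝ)) *ᵥ v = t0 • v := by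
        rw [Matrix.smul_mulVec, Matrix.one_mulVec]
      rw [← h3, ← Matrix.add_mulVec]
      exact hker
    linear_combination (norm := module) h2
  set z : Fin n → ℝ := fun i => if h : i ∈ s then v ⟨i, h⟩ else 0 with hz
  refine ⟨z, ?_, ?_⟩
  · intro h0
    apply hv
    funext j
    have := congrFun h0 j.1
    simpa [hz, j.2] using this
  · intro i
    by_cases hi : i ∈ s
    · have hMz : (M *ᵥ z) i = (A *ᵥ v) ⟨i, hi⟩ := by
        have h4 : (M *ᵥ z) i = ∑ j ∈ s, M i j * z j := by
          rw [show (M *ᵥ z) i = ∑ j : Fin n, M i j * z j from by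
            simp [Matrix.mulVec, dotProduct]]
          symm
          apply Finset.sum_subset (Finset.subset_univ s)
          intro j _ hjs
          simp [hz, hjs]
        rw [h4, ← Finset.sum_attach s (fun j => M i j * z j)]
        simp only [hA, Matrix.mulVec, dotProduct, Matrix.submatrix_apply]
        apply Finset.sum_congr rfl
        intro j _
        simp [hz, j.2]
      rw [hMz, hAv]
      have hzi : z i = v ⟨i, hi⟩ := by simp [hz, hi]
      rw [hzi]
      simp only [Pi.neg_apply, Pi.smul_apply, smul_eq_mul]
      have : v ⟨i, hi⟩ * -(t0 * v ⟨i, hi⟩) = -(t0 * (v ⟨i, hi⟩ * v ⟨i, hi⟩)) := by ring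
      rw [this]
      exact neg_nonpos.mpr (mul_nonneg ht0nonneg (mul_self_nonneg _))
    · simp [hz, hi]

lemma two_solutions {n : ℕ} (G : Matrix (Fin n) (Fin n) ℝ) (hdiag : ∀ i, G i i = 0)
    (z : Fin n → ℝ) (hz : z ≠ 0) (hsr : ∀ i, z i * ((1 + G) *ᵥ z) i ≤ 0) :
    ∃ q x y : Fin n → ℝ, NashEq G q x ∧ NashEq G q y ∧ x ≠ y := by
  classical
  set M : Matrix (Fin n) (Fin n) ℝ := 1 + G with hM
  set q : Fin n → ℝ := fun i => min ((M *ᵥ posP z) i) ((M *ᵥ negP z) i) with hq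
  have hzpn : z = posP z - negP z := by
    funext i
    rw [Pi.sub_apply, posP_sub_negP]
  have hMz : ∀ i, (M *ᵥ z) i = (M *ᵥ posP z) i - (M *ᵥ negP z) i := by
    intro i
    conv_lhs => rw [hzpn]
    rw [Matrix.mulVec_sub]
    rfl
  refine ⟨q, posP z, negP z, ?_, ?_, ?_⟩
  · rw [nash_iff G hdiag]
    intro i
    refine ⟨posP_nonneg z i, by
      simp only [hq]
      have := min_le_left ((M *ᵥ posP z) i) ((M *ᵥ negP z) i)
      linarith, ?_⟩
    rcases eq_or_lt_of_le (posP_nonneg z i) with h | h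
    · rw [← h]; ring
    · have hzi : 0 < z i := by
        by_contra hc
        push_neg at hc
        have : posP z i = 0 := max_eq_right hc
        rw [this] at h
        exact lt_irrefl 0 h
      have hw : ((1 + G) *ᵥ z) i ≤ 0 := by
        have h1 := hsr i
        nlinarith
      have h2 : (M *ᵥ posP z) i ≤ (M *ᵥ negP z) i := by
        have := hMz i
        rw [hM] at this ⊢
        linarith [hw]
      have h3 : q i = (M *ᵥ posP z) i := min_eq_left h2
      rw [hM] at h3
      rw [h3]
      ring
  · rw [nash_iff G hdiag]
    intro i
    refine ⟨negP_nonneg z i, by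
      simp only [hq]
      have := min_le_right ((M *ᵥ posP z) i) ((M *ᵥ negP z) i)
      linarith, ?_⟩
    rcases eq_or_lt_of_le (negP_nonneg z i) with h | h
    · rw [← h]; ring
    · have hzi : z i < 0 := by
        by_contra hc
        push_neg at hc
        have : negP z i = 0 := max_eq_right (neg_nonpos.mpr hc)
        rw [this] at h
        exact lt_irrefl 0 h
      have hw : 0 ≤ ((1 + G) *ᵥ z) i := by
        have h1 := hsr i
        nlinarith
      have h2 : (M *ᵥ negP z) i ≤ (M *ᵥ posP z) i := by
        have := hMz i
        rw [hM] at this ⊢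
        linarith [hw]
      have h3 : q i = (M *ᵥ negP z) i := min_eq_right h2
      rw [hM] at h3
      rw [h3]
      ring
  · intro hc
    apply hz
    funext i
    have := congrFun hc i
    have h4 := posP_sub_negP z i
    rw [this] at h4
    rw [← h4]
    simp


end FinStuff
end PGame

theorem unique_nash_iff_P (n : ℕ) (hn : 1 ≤ n) (G : Matrix (Fin n) (Fin n) ℝ)
    (hdiag : ∀ i, G i i = 0) :
    (∀ q : Fin n → ℝ, ∃! x : Fin n → ℝ, NashEq G q x) ↔ IsPMatrix (1 + G) := by
  constructor
  · intro hU
    by_contra hnp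
    simp only [IsPMatrix, not_forall] at hnp
    obtain ⟨s, hs, hdet⟩ := hnp
    have hdet' : ((1 + G).submatrix (Subtype.val : {i // i ∈ s} → Fin n) Subtype.val).det ≤ 0 :=
      not_lt.mp hdet
    obtain ⟨z, hz, hsr⟩ := PGame.exists_sign_reversed (1 + G) s hs hdet'
    obtain ⟨q, x, y, hx, hy, hxy⟩ := PGame.two_solutions G hdiag z hz hsr
    obtain ⟨x0, _, huniq⟩ := hU q
    exact hxy ((huniq x hx).trans (huniq y hy).symm)
  · intro hP q
    obtain ⟨z, hz⟩ := PGame.Fm_surj n (1 + G) hP q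
    refine ⟨PGame.posP z, PGame.Fm_nash G hdiag q z hz, ?_⟩
    intro y hy
    obtain ⟨h1, h2⟩ := PGame.nash_Fm G hdiag q y hy
    have hinj := PGame.Fm_inj hP
    have h3 := hinj (h1.trans hz.symm)
    rw [← h2, h3]
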